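/- For every even positive integer m, Σ_{n=1}^{∞} (ζ(2n)/(n·4^n)) · C(2n, m) = (1/m) · (2ζ(m)(1 − 1/2^m) − 1), where C(2n, m) denotes the binomial coefficient. -/

import Mathlib

open Real

/-- Real Riemann zeta values via the series `∑ 1/k^m`. -/
noncomputable def zetaR (m : ℕ) : ℝ := ∑' k : ℕ, 1 / ((k : ℝ) + 1) ^ m

lemma summable_shift {m : ℕ} (hm : 2 ≤ m) :
    Summable (fun k : ℕ => 1 / ((k : ℝ) + 1) ^ m) := by
  have h := summable_one_div_nat_pow.mpr (by omega : 1 < m)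
  have h2 := (summable_nat_add_iff 1).mpr h
  refine h2.congr fun k => ?_
  push_cast
  ring

lemma hasSum_choose_pow {x : ℝ} (hx : |x| < 1) (r : ℕ) :
    HasSum (fun j : ℕ => (j.choose r : ℝ) * x ^ j) (x ^ r / (1 - x) ^ (r + 1)) := by
  have h := hasSum_choose_mul_geometric_of_norm_lt_one (𝕜 := ℝ) r (by simpa using hx)
  have h2 := h.mul_left (x ^ r)
  rw [mul_one_div] at h2
  have h3 : HasSum (fun n : ℕ => (((n + r).choose r : ℝ)) * x ^ (n + r))
      (x ^ r / (1 - x) ^ (r + 1)) := by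
    have e : (fun n : ℕ => (((n + r).choose r : ℝ)) * x ^ (n + r))
        = fun n : ℕ => x ^ r * (((n + r).choose r : ℝ) * x ^ n) := by
      funext n; rw [pow_add]; ring
    rw [e]; exact h2
  have h4 := (hasSum_nat_add_iff (f := fun j : ℕ => (j.choose r : ℝ) * x ^ j) r).mp h3
  have h5 : ∑ i ∈ Finset.range r, ((i.choose r : ℝ)) * x ^ i = 0 := by
    refine Finset.sum_eq_zero fun i hi => ?_
    rw [Nat.choose_eq_zero_of_lt (Finset.mem_range.mp hi)]
    simp
  rwa [h5, add_zero] at h4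

lemma hasSum_inner {m : ℕ} (hm : Even m) (hm0 : 0 < m) {x : ℝ} (hx0 : 0 < x) (hx1 : x < 1) :
    HasSum (fun n : ℕ => (Nat.choose (2 * (n + 1)) m : ℝ) * x ^ (2 * (n + 1)) / ((n : ℝ) + 1))
      (((x / (1 - x)) ^ m + (x / (1 + x)) ^ m) / m) := by
  obtain ⟨r, hr⟩ : ∃ r, m = r + 1 := ⟨m - 1, by omega⟩
  have hrodd : Odd r := by
    rcases hm with ⟨t, ht⟩
    exact ⟨t - 1, by omega⟩
  have hm' : (m : ℝ) ≠ 0 := Nat.cast_ne_zero.mpr hm0.ne'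
  have h1x : (1 : ℝ) - x ≠ 0 := by linarith
  have h2x : (1 : ℝ) + x ≠ 0 := by linarith
  have hax : |x| < 1 := by rwa [abs_of_pos hx0]
  have hA := hasSum_choose_pow hax r
  have hB := hasSum_choose_pow (x := -x) (by simpa using hax) r
  have hU := (hA.sub hB).div_const 2
  have hinj : Function.Injective (fun n : ℕ => 2 * n + 1) := fun a b h => by
    simp only at h; omega
  have hvanish : ∀ j ∉ Set.range (fun n : ℕ => 2 * n + 1),
      ((j.choose r : ℝ) * x ^ j - (j.choose r : ℝ) * (-x) ^ j) / 2 = 0 := by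
    intro j hj
    have hje : Even j := by
      rcases Nat.even_or_odd j with h | ⟨t, ht⟩
      · exact h
      · exact absurd ⟨t, by simp only; omega⟩ hj
    rw [hje.neg_pow]
    ring
  have hodd := (Function.Injective.hasSum_iff hinj hvanish).mpr hU
  have e1 : ((fun j : ℕ => ((j.choose r : ℝ) * x ^ j - (j.choose r : ℝ) * (-x) ^ j) / 2)
        ∘ fun n : ℕ => 2 * n + 1)
      = fun n : ℕ => ((2 * n + 1).choose r : ℝ) * x ^ (2 * n + 1) := by
    funext n
    have hno : Odd (2 * n + 1) := ⟨n, by omega⟩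
    simp only [Function.comp_apply, hno.neg_pow]
    ring
  rw [e1] at hodd
  have hfin := hodd.mul_left (2 * x / m)
  have e2 : (fun n : ℕ => 2 * x / m * (((2 * n + 1).choose r : ℝ) * x ^ (2 * n + 1)))
      = fun n : ℕ => (Nat.choose (2 * (n + 1)) m : ℝ) * x ^ (2 * (n + 1)) / ((n : ℝ) + 1) := by
    funext n
    have hnat : (2 * (n + 1)) * (2 * n + 1).choose r = (2 * (n + 1)).choose m * m := by
      have h0 := Nat.add_one_mul_choose_eq (2 * n + 1) r
      have h1 : (2 * n + 1 + 1) = 2 * (n + 1) := by omega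
      rw [h1] at h0
      rw [h0, hr]
    have key : (2 * ((n : ℝ) + 1)) * ((2 * n + 1).choose r : ℝ)
        = ((2 * (n + 1)).choose m : ℝ) * (m : ℝ) := by
      exact_mod_cast hnat
    have hn1 : ((n : ℝ) + 1) ≠ 0 := by positivity
    have hx2 : x ^ (2 * (n + 1)) = x ^ (2 * n + 1) * x := by
      rw [show 2 * (n + 1) = 2 * n + 1 + 1 from by omega, pow_succ]
    rw [hx2]
    field_simp
    linear_combination key
  rw [e2] at hfin
  convert hfin using 1
  · rfl
  have hnegr : (-x) ^ r = -x ^ r := hrodd.neg_pow x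
  rw [hnegr]
  have h3 : (1 : ℝ) - -x = 1 + x := by ring
  rw [h3, hr]
  rw [div_pow, div_pow]
  field_simp
  ring

lemma hasSum_odd_zeta {m : ℕ} (hm : 2 ≤ m) :
    HasSum (fun k : ℕ => (1 / (2 * (k : ℝ) + 1)) ^ m) (zetaR m * (1 - 1 / 2 ^ m)) := by
  have hsum := summable_shift hm
  set f : ℕ → ℝ := fun k => 1 / ((k : ℝ) + 1) ^ m with hf
  have hZ : HasSum f (zetaR m) := hsum.hasSum
  have hEsum : Summable (fun k : ℕ => f (2 * k)) := by
    refine hsum.of_nonneg_of_le (fun k => by positivity) (fun k => ?_)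
    simp only [hf]
    push_cast
    gcongr
    linarith [Nat.cast_nonneg (α := ℝ) k]
  have hE := hEsum.hasSum
  have hB : HasSum (fun k : ℕ => f (2 * k + 1)) (1 / 2 ^ m * zetaR m) := by
    have h := hZ.mul_left (1 / 2 ^ m)
    have e : (fun k : ℕ => 1 / 2 ^ m * f k) = fun k : ℕ => f (2 * k + 1) := by
      funext k
      simp only [hf]
      have h2 : (((2 * k + 1 : ℕ) : ℝ) + 1) ^ m = 2 ^ m * ((k : ℝ) + 1) ^ m := by
        rw [← mul_pow]; push_cast; ring_nf
      rw [h2]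
      have hk : ((k : ℝ) + 1) ^ m ≠ 0 := by positivity
      have h2m : (2 : ℝ) ^ m ≠ 0 := by positivity
      field_simp
    rw [← e]; exact h
  have hcomb := hE.even_add_odd hB
  have hEq : (∑' k : ℕ, f (2 * k)) + 1 / 2 ^ m * zetaR m = zetaR m := hcomb.unique hZ
  have etgt : (fun k : ℕ => (1 / (2 * (k : ℝ) + 1)) ^ m) = fun k : ℕ => f (2 * k) := by
    funext k
    simp only [hf]
    push_cast
    rw [div_pow, one_pow]
  rw [etgt]
  have hval : zetaR m * (1 - 1 / 2 ^ m) = ∑' k : ℕ, f (2 * k) := by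
    have h9 : (∑' k : ℕ, f (2 * k)) = zetaR m - 1 / 2 ^ m * zetaR m := by linarith
    rw [h9]; ring
  rw [hval]
  exact hE

theorem zeta_binom_four_even (m : ℕ) (hm : Even m) (hm0 : 0 < m) :
    ∑' n : ℕ, zetaR (2 * (n + 1)) / (((n : ℝ) + 1) * 4 ^ (n + 1)) *
      (Nat.choose (2 * (n + 1)) m : ℝ) =
      (1 / (m : ℝ)) * (2 * zetaR m * (1 - 1 / 2 ^ m) - 1) := by
  have hm2 : 2 ≤ m := by rcases hm with ⟨t, ht⟩; omega
  have hm' : (m : ℝ) ≠ 0 := Nat.cast_ne_zero.mpr hm0.ne'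
  set T : ℕ → ℕ → ℝ := fun n k =>
    (Nat.choose (2 * (n + 1)) m : ℝ) * (1 / (2 * ((k : ℝ) + 1))) ^ (2 * (n + 1)) / ((n : ℝ) + 1)
    with hT
  have hInner : ∀ k : ℕ, HasSum (fun n => T n k)
      (((1 / (2 * (k : ℝ) + 1)) ^ m + (1 / (2 * (k : ℝ) + 3)) ^ m) / m) := by
    intro k
    have hk0 : (0 : ℝ) ≤ (k : ℝ) := Nat.cast_nonneg k
    have hx0 : (0 : ℝ) < 1 / (2 * ((k : ℝ) + 1)) := by positivity
    have hx1 : 1 / (2 * ((k : ℝ) + 1)) < 1 := by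
      rw [div_lt_one (by positivity)]; linarith
    have h := hasSum_inner hm hm0 hx0 hx1
    have hd : (2 : ℝ) * ((k : ℝ) + 1) ≠ 0 := by positivity
    have e1 : (1 / (2 * ((k : ℝ) + 1))) / (1 - 1 / (2 * ((k : ℝ) + 1)))
        = 1 / (2 * (k : ℝ) + 1) := by
      rw [div_eq_div_iff]
      · field_simp
        ring
      · have : 1 - 1 / (2 * ((k : ℝ) + 1)) = (2 * (k : ℝ) + 1) / (2 * ((k : ℝ) + 1)) := by
          field_simp; ring
        rw [this]; positivity
      · positivity
    have e2 : (1 / (2 * ((k : ℝ) + 1))) / (1 + 1 / (2 * ((k : ℝ) + 1)))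
        = 1 / (2 * (k : ℝ) + 3) := by
      rw [div_eq_div_iff]
      · field_simp
        ring
      · have : 1 + 1 / (2 * ((k : ℝ) + 1)) = (2 * (k : ℝ) + 3) / (2 * ((k : ℝ) + 1)) := by
          field_simp; ring
        rw [this]; positivity
      · positivity
    rw [e1, e2] at h
    exact h
  have hO := hasSum_odd_zeta hm2
  have hOshift : HasSum (fun k : ℕ => (1 / (2 * (k : ℝ) + 3)) ^ m)
      (zetaR m * (1 - 1 / 2 ^ m) - 1) := by
    set g : ℕ → ℝ := fun k : ℕ => (1 / (2 * (k : ℝ) + 1)) ^ m with hg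
    have h2 : HasSum (fun n : ℕ => g (n + 1)) (zetaR m * (1 - 1 / 2 ^ m) - 1) := by
      rw [hasSum_nat_add_iff 1]
      simpa [hg] using hO
    have e : (fun n : ℕ => g (n + 1)) = fun k : ℕ => (1 / (2 * (k : ℝ) + 3)) ^ m := by
      funext k
      rw [hg]
      push_cast
      ring_nf
    rwa [e] at h2
  have hS := (hO.add hOshift).div_const m
  have hRow : ∀ n : ℕ, Summable (fun k => T n k) := by
    intro n
    have h := (summable_shift (m := 2 * (n + 1)) (by omega)).mul_left
      ((Nat.choose (2 * (n + 1)) m : ℝ) * (1 / 2 ^ (2 * (n + 1))) / ((n : ℝ) + 1))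
    refine h.congr fun k => ?_
    simp only [hT]
    rw [div_pow, one_pow, mul_pow, ← one_div_mul_one_div]
    ring
  have hP : Summable (Function.uncurry (fun (k n : ℕ) => T n k)) := by
    refine (summable_prod_of_nonneg ?_).mpr ⟨fun k => (hInner k).summable, ?_⟩
    · intro p
      simp only [Function.uncurry, hT]
      positivity
    · refine hS.summable.congr fun k => ?_
      exact ((hInner k).tsum_eq).symm
  have hswap := Summable.tsum_comm' (f := fun (k n : ℕ) => T n k) hP
    (fun k => (hInner k).summable) hRow
  have hLHS : ∑' n : ℕ, zetaR (2 * (n + 1)) / (((n : ℝ) + 1) * 4 ^ (n + 1)) *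
      (Nat.choose (2 * (n + 1)) m : ℝ) = ∑' n : ℕ, ∑' k : ℕ, T n k := by
    refine tsum_congr fun n => ?_
    have e : (fun k => T n k) = fun k : ℕ =>
        ((Nat.choose (2 * (n + 1)) m : ℝ) / (((n : ℝ) + 1) * 4 ^ (n + 1)))
          * (1 / ((k : ℝ) + 1) ^ (2 * (n + 1))) := by
      funext k
      simp only [hT]
      have h4 : (4 : ℝ) ^ (n + 1) = 2 ^ (2 * (n + 1)) := by
        rw [show (4 : ℝ) = 2 ^ 2 by norm_num, ← pow_mul]
      have hk : ((k : ℝ) + 1) ≠ 0 := by positivity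
      have hn : ((n : ℝ) + 1) ≠ 0 := by positivity
      have h2e : (2 : ℝ) ^ (2 * (n + 1)) ≠ 0 := by positivity
      rw [div_pow, one_pow, mul_pow, h4]
      field_simp
      try ring
      try exact Or.inl trivial
    rw [e, tsum_mul_left]
    have hz : ∑' k : ℕ, 1 / ((k : ℝ) + 1) ^ (2 * (n + 1)) = zetaR (2 * (n + 1)) := rfl
    rw [hz]
    ring
  rw [hLHS, hswap]
  have hcols : ∑' k : ℕ, ∑' n : ℕ, T n k
      = (zetaR m * (1 - 1 / 2 ^ m) + (zetaR m * (1 - 1 / 2 ^ m) - 1)) / m := by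
    rw [← hS.tsum_eq]
    exact tsum_congr fun k => (hInner k).tsum_eq
  rw [hcols]
  ring
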